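/- For every set T of n edges of the simple complete graph K_n on n ≥ 3 vertices, there exists a family of n connected, pairwise disjoint, pairwise incident edge sets, each containing exactly one edge of T. -/

import Mathlib

/-- An edge set `F` is connected if it is nonempty and any two of its edges are
linked by a chain of edges of `F`, consecutive ones sharing an endpoint. -/
def EdgesConnected {V : Type*} (F : Set (Sym2 V)) : Prop :=
  F.Nonempty ∧ ∀ e ∈ F, ∀ f ∈ F,
    Relation.ReflTransGen (fun a b => a ∈ F ∧ b ∈ F ∧ ∃ v : V, v ∈ a ∧ v ∈ b) e f

/-- Two edge sets are incident if some edge of one shares an endpoint with some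
edge of the other. -/
def EdgesIncident {V : Type*} (F F' : Set (Sym2 V)) : Prop :=
  ∃ e ∈ F, ∃ f ∈ F', ∃ v : V, v ∈ e ∧ v ∈ f

/-- The family `𝔎` of pairwise disjoint sets is traversed by `T`: each member of
`𝔎` contains exactly one element of `T`, and each element of `T` lies in a member. -/
def TraversedBy {α : Type*} (𝔎 : Set (Set α)) (T : Set α) : Prop :=
  (∀ A ∈ 𝔎, ∃! e, e ∈ T ∧ e ∈ A) ∧ ∀ e ∈ T, ∃ A ∈ 𝔎, e ∈ A

namespace CGT

open Finset
open scoped Classical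
set_option linter.unusedSectionVars false

variable {α : Type*} [Fintype α] [DecidableEq α]

variable (Tf : Finset (Sym2 α))

/-- reachability in the graph with edge set `Tf` -/
def Reach (a b : α) : Prop := Relation.ReflTransGen (fun x y => s(x,y) ∈ Tf) a b

lemma reach_refl (a : α) : Reach Tf a a := Relation.ReflTransGen.refl

lemma reach_symm {a b : α} (h : Reach Tf a b) : Reach Tf b a := by
  refine (@Relation.ReflTransGen.stdSymm _ _ ⟨?_⟩).symm _ _ h
  intro x y hxy
  rwa [Sym2.eq_swap] at hxy

lemma reach_trans {a b c : α} (h : Reach Tf a b) (h' : Reach Tf b c) : Reach Tf a c :=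
  h.trans h'

lemma reach_of_mem_edge {e : Sym2 α} (he : e ∈ Tf) {a b : α} (ha : a ∈ e) (hb : b ∈ e) :
    Reach Tf a b := by
  induction e with
  | _ x y =>
    rw [Sym2.mem_iff] at ha hb
    have hxy : Reach Tf x y := Relation.ReflTransGen.single he
    rcases ha with rfl | rfl <;> rcases hb with rfl | rfl
    · exact Relation.ReflTransGen.refl
    · exact hxy
    · exact reach_symm Tf hxy
    · exact Relation.ReflTransGen.refl

/-- the connected component of `v` -/
noncomputable def comp (v : α) : Finset α := univ.filter (Reach Tf v)

/-- edges touching the finset `A` -/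
noncomputable def touch (A : Finset α) : Finset (Sym2 α) :=
  Tf.filter (fun e => ∃ x ∈ e, x ∈ A)

/-- edges inside the finset `B` -/
noncomputable def inside (B : Finset α) : Finset (Sym2 α) :=
  Tf.filter (fun e => ∀ x ∈ e, x ∈ B)

/-- special vertices: those in a "deficient" component -/
noncomputable def Special (v : α) : Prop := (touch Tf (comp Tf v)).card < (comp Tf v).card

lemma mem_comp {v w : α} : w ∈ comp Tf v ↔ Reach Tf v w := by
  simp [comp]

lemma comp_congr {v w : α} (h : Reach Tf v w) : comp Tf v = comp Tf w := by
  ext x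
  simp only [mem_comp]
  exact ⟨fun hx => reach_trans Tf (reach_symm Tf h) hx, fun hx => reach_trans Tf h hx⟩

lemma special_congr {v w : α} (h : Reach Tf v w) : Special Tf v ↔ Special Tf w := by
  unfold Special
  rw [comp_congr Tf h]

lemma special_congr_edge {e : Sym2 α} (he : e ∈ Tf) {a b : α} (ha : a ∈ e) (hb : b ∈ e) :
    (Special Tf a ↔ Special Tf b) :=
  special_congr Tf (reach_of_mem_edge Tf he ha hb)

lemma boundary_edge {A : Finset α} {a z : α} (ha : a ∈ A) (hz : z ∉ A) (hr : Reach Tf a z) :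
    ∃ w x, w ∈ A ∧ x ∉ A ∧ s(w, x) ∈ Tf := by
  induction hr with
  | refl => exact absurd ha hz
  | tail hab hbc ih =>
    rename_i b c
    by_cases hb : b ∈ A
    · exact ⟨b, c, hb, hz, hbc⟩
    · exact ih hb

lemma touch_mono {A B : Finset α} (h : A ⊆ B) : touch Tf A ⊆ touch Tf B := by
  intro e he
  rw [touch, mem_filter] at he ⊢
  obtain ⟨he1, x, hx, hx2⟩ := he
  exact ⟨he1, x, hx, h hx2⟩

/-- boundary counting: a proper "subset of a component" has at least as many touching edges. -/
lemma count_boundary (v₀ : α) :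
    ∀ A : Finset α, (∀ x ∈ A, Reach Tf v₀ x) → (∃ z, Reach Tf v₀ z ∧ z ∉ A) →
      A.card ≤ (touch Tf A).card := by
  intro A
  induction A using Finset.strongInduction with
  | _ A ih =>
    intro hA hz
    rcases A.eq_empty_or_nonempty with rfl | ⟨a, ha⟩
    · simp
    obtain ⟨z, hzr, hzA⟩ := hz
    have hra : Reach Tf a z := reach_trans Tf (reach_symm Tf (hA a ha)) hzr
    obtain ⟨w, x, hw, hx, hwx⟩ := boundary_edge Tf ha hzA hra
    have hsub : A.erase w ⊂ A := Finset.erase_ssubset hw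
    have hIH : (A.erase w).card ≤ (touch Tf (A.erase w)).card := by
      refine ih _ hsub (fun y hy => hA y (Finset.mem_of_mem_erase hy)) ⟨z, hzr, ?_⟩
      exact fun hc => hzA (Finset.mem_of_mem_erase hc)
    have hnotin : s(w, x) ∉ touch Tf (A.erase w) := by
      rw [touch, mem_filter]
      rintro ⟨-, y, hy, hy2⟩
      rw [Sym2.mem_iff] at hy
      rcases hy with rfl | rfl
      · exact (Finset.notMem_erase y A) hy2
      · exact hx (Finset.mem_of_mem_erase hy2)
    have hmem : s(w, x) ∈ touch Tf A := by
      rw [touch, mem_filter]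
      exact ⟨hwx, w, by simp, hw⟩
    have hsub2 : insert s(w,x) (touch Tf (A.erase w)) ⊆ touch Tf A := by
      intro e he
      rw [Finset.mem_insert] at he
      rcases he with rfl | he
      · exact hmem
      · exact touch_mono Tf (Finset.erase_subset w A) he
    calc A.card = (A.erase w).card + 1 := (Finset.card_erase_add_one hw).symm
      _ ≤ (touch Tf (A.erase w)).card + 1 := by omega
      _ = (insert s(w,x) (touch Tf (A.erase w))).card := by
          rw [Finset.card_insert_of_notMem hnotin]
      _ ≤ (touch Tf A).card := Finset.card_le_card hsub2

lemma touch_endpoints_in_comp {v : α} {A : Finset α} (hA : A ⊆ comp Tf v) :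
    ∀ e ∈ touch Tf A, ∀ x ∈ e, x ∈ comp Tf v := by
  intro e he x hx
  rw [touch, mem_filter] at he
  obtain ⟨he1, y, hy, hy2⟩ := he
  have : Reach Tf v y := (mem_comp Tf).1 (hA hy2)
  exact (mem_comp Tf).2 (reach_trans Tf this (reach_of_mem_edge Tf he1 hy hx))

lemma touch_disjoint {v : α} {A B : Finset α} (hA : A ⊆ comp Tf v)
    (hB : ∀ x ∈ B, x ∉ comp Tf v) : Disjoint (touch Tf A) (touch Tf B) := by
  rw [Finset.disjoint_left]
  intro e heA heB
  rw [touch, mem_filter] at heB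
  obtain ⟨-, y, hy, hy2⟩ := heB
  exact hB y hy2 (touch_endpoints_in_comp Tf hA e heA y hy)

/-- counting for sets of non-special vertices -/
lemma count_normal :
    ∀ A : Finset α, (∀ x ∈ A, ¬ Special Tf x) → A.card ≤ (touch Tf A).card := by
  intro A
  induction A using Finset.strongInduction with
  | _ A ih =>
    intro hA
    rcases A.eq_empty_or_nonempty with rfl | ⟨a, ha⟩
    · simp
    set c := comp Tf a with hc
    have hac : a ∈ c := (mem_comp Tf).2 Relation.ReflTransGen.refl
    have hAc_sub : A ∩ c ⊆ c := Finset.inter_subset_right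
    have hsdiff : A \ c ⊂ A := by
      rw [Finset.ssubset_iff_of_subset (Finset.sdiff_subset)]
      exact ⟨a, ha, by simp [hac]⟩
    have hIH : (A \ c).card ≤ (touch Tf (A \ c)).card :=
      ih _ hsdiff (fun x hx => hA x (Finset.mem_sdiff.1 hx).1)
    have hdisj : Disjoint (touch Tf (A ∩ c)) (touch Tf (A \ c)) :=
      touch_disjoint Tf hAc_sub (fun x hx => (Finset.mem_sdiff.1 hx).2)
    have hcardsplit : A.card ≤ (A ∩ c).card + (A \ c).card := by
      rw [Finset.card_inter_add_card_sdiff]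
    have hsubU : (touch Tf (A ∩ c)) ∪ (touch Tf (A \ c)) ⊆ touch Tf A := by
      intro e he
      rcases Finset.mem_union.1 he with he | he
      · exact touch_mono Tf Finset.inter_subset_left he
      · exact touch_mono Tf Finset.sdiff_subset he
    have hkey : (A ∩ c).card ≤ (touch Tf (A ∩ c)).card := by
      by_cases hfull : c ⊆ A
      · have : A ∩ c = c := by
          apply Finset.Subset.antisymm Finset.inter_subset_right
          intro x hx; exact Finset.mem_inter.2 ⟨hfull hx, hx⟩
        rw [this]
        have h2 := hA a ha
        unfold Special at h2
        rw [← hc] at h2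
        omega
      · obtain ⟨z, hz1, hz2⟩ := Finset.not_subset.1 hfull
        refine count_boundary Tf a _ ?_ ⟨z, (mem_comp Tf).1 hz1, ?_⟩
        · intro x hx
          exact (mem_comp Tf).1 (Finset.mem_inter.1 hx).2
        · intro hzc
          exact hz2 (Finset.mem_inter.1 hzc).1
    calc A.card ≤ (A ∩ c).card + (A \ c).card := hcardsplit
      _ ≤ (touch Tf (A ∩ c)).card + (touch Tf (A \ c)).card := by omega
      _ = ((touch Tf (A ∩ c)) ∪ (touch Tf (A \ c))).card := (Finset.card_union_of_disjoint hdisj).symm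
      _ ≤ (touch Tf A).card := Finset.card_le_card hsubU

lemma sym2_exists_mem (e : Sym2 α) : ∃ x, x ∈ e := by
  induction e with
  | _ x y => exact ⟨x, by simp⟩

lemma inside_subset_touch {B C : Finset α} (hBC : B ⊆ C) : inside Tf B ⊆ touch Tf C := by
  intro e he
  rw [inside, mem_filter] at he
  obtain ⟨he1, h2⟩ := he
  obtain ⟨x, hx⟩ := sym2_exists_mem e
  exact mem_filter.2 ⟨he1, x, hx, hBC (h2 x hx)⟩

/-- edges inside a special set are strictly fewer than vertices -/
lemma count_special_inside :
    ∀ B : Finset α, (∀ x ∈ B, Special Tf x) → B.Nonempty →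
      (inside Tf B).card + 1 ≤ B.card := by
  intro B
  induction B using Finset.strongInduction with
  | _ B ih =>
    intro hB ⟨b, hb⟩
    set c := comp Tf b with hc
    have hbc : b ∈ c := (mem_comp Tf).2 Relation.ReflTransGen.refl
    -- inside splits
    have hsplit : inside Tf B ⊆ inside Tf (B ∩ c) ∪ inside Tf (B \ c) := by
      intro e he
      have he' := he
      rw [inside, mem_filter] at he'
      obtain ⟨he1, h2⟩ := he'
      by_cases hx : ∃ x ∈ e, x ∈ c
      · obtain ⟨x, hx1, hx2⟩ := hx
        refine Finset.mem_union_left _ (mem_filter.2 ⟨he1, fun y hy => ?_⟩)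
        refine Finset.mem_inter.2 ⟨h2 y hy, ?_⟩
        exact (mem_comp Tf).2 (reach_trans Tf ((mem_comp Tf).1 hx2)
          (reach_of_mem_edge Tf he1 hx1 hy))
      · push_neg at hx
        exact Finset.mem_union_right _ (mem_filter.2 ⟨he1, fun y hy =>
          Finset.mem_sdiff.2 ⟨h2 y hy, hx y hy⟩⟩)
    have hdisj : Disjoint (inside Tf (B ∩ c)) (inside Tf (B \ c)) := by
      rw [Finset.disjoint_left]
      intro e h1 h2
      rw [inside, mem_filter] at h1 h2
      obtain ⟨x, hx⟩ := sym2_exists_mem e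
      have hx1 := h1.2 x hx
      have hx2 := h2.2 x hx
      exact (Finset.mem_sdiff.1 hx2).2 (Finset.mem_inter.1 hx1).2
    -- bound the part inside the component
    have hkey : (inside Tf (B ∩ c)).card + 1 ≤ (B ∩ c).card := by
      have hins_sub : inside Tf (B ∩ c) ⊆ touch Tf c :=
        inside_subset_touch Tf Finset.inter_subset_right
      have hspecb : (touch Tf c).card < c.card := by
        have h2 := hB b hb
        unfold Special at h2
        rw [← hc] at h2
        exact h2
      by_cases hfull : c ⊆ B
      · have heq : B ∩ c = c := by
          apply Finset.Subset.antisymm Finset.inter_subset_right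
          intro x hx; exact Finset.mem_inter.2 ⟨hfull hx, hx⟩
        have hcc : (B ∩ c).card = c.card := by rw [heq]
        have := Finset.card_le_card hins_sub
        omega
      · obtain ⟨z, hz1, hz2⟩ := Finset.not_subset.1 hfull
        set W := c \ (B ∩ c) with hW
        have hWcount : W.card ≤ (touch Tf W).card := by
          refine count_boundary Tf b _ ?_ ⟨b, Relation.ReflTransGen.refl, ?_⟩
          · intro x hx
            exact (mem_comp Tf).1 (Finset.mem_sdiff.1 hx).1
          · intro hbW
            exact (Finset.mem_sdiff.1 hbW).2 (Finset.mem_inter.2 ⟨hb, hbc⟩)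
        have hdisj2 : Disjoint (inside Tf (B ∩ c)) (touch Tf W) := by
          rw [Finset.disjoint_left]
          intro e h1 h2
          rw [inside, mem_filter] at h1
          rw [touch, mem_filter] at h2
          obtain ⟨-, y, hy, hy2⟩ := h2
          exact (Finset.mem_sdiff.1 hy2).2 (h1.2 y hy)
        have hsub2 : inside Tf (B ∩ c) ∪ touch Tf W ⊆ touch Tf c := by
          intro e he
          rcases Finset.mem_union.1 he with he | he
          · exact hins_sub he
          · exact touch_mono Tf Finset.sdiff_subset he
        have hcards : (inside Tf (B ∩ c)).card + W.card ≤ (touch Tf c).card := by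
          have := Finset.card_le_card hsub2
          rw [Finset.card_union_of_disjoint hdisj2] at this
          omega
        have hWcard : W.card = c.card - (B ∩ c).card := Finset.card_sdiff_of_subset Finset.inter_subset_right
        have hle : (B ∩ c).card ≤ c.card := Finset.card_le_card Finset.inter_subset_right
        omega
    have hle2 : (inside Tf B).card ≤ (inside Tf (B ∩ c)).card + (inside Tf (B \ c)).card := by
      have := Finset.card_le_card hsplit
      have h2 := Finset.card_union_le (inside Tf (B ∩ c)) (inside Tf (B \ c))
      omega
    have hBsplit : B.card = (B ∩ c).card + (B \ c).card := (Finset.card_inter_add_card_sdiff B c).symm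
    rcases (B \ c).eq_empty_or_nonempty with hemp | hne
    · have : inside Tf (B \ c) = ∅ := by
        rw [hemp]
        ext e
        simp only [inside, mem_filter, Finset.notMem_empty, iff_false, not_and]
        intro he h2
        obtain ⟨x, hx⟩ := sym2_exists_mem e
        exact h2 x hx
      rw [hemp] at hBsplit
      simp only [Finset.card_empty] at hBsplit
      rw [this] at hle2
      simp at hle2
      omega
    · have hss : B \ c ⊂ B := by
        rw [Finset.ssubset_iff_of_subset (Finset.sdiff_subset)]
        exact ⟨b, hb, by simp [hbc]⟩
      have hIH := ih _ hss (fun x hx => hB x (Finset.mem_sdiff.1 hx).1) hne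
      omega

lemma exists_normal (huniv : (Finset.univ : Finset α).Nonempty)
    (hcard : Tf.card = Fintype.card α) : ∃ w : α, ¬ Special Tf w := by
  by_contra h
  push_neg at h
  have hins : inside Tf (Finset.univ : Finset α) = Tf := by
    apply Finset.Subset.antisymm (Finset.filter_subset _ _)
    intro e he
    exact mem_filter.2 ⟨he, fun x _ => Finset.mem_univ x⟩
  have := count_special_inside Tf Finset.univ (fun x _ => h x) huniv
  rw [hins, Finset.card_univ, hcard] at this
  omega

noncomputable def starv (v : α) : Finset (Sym2 α) := Tf.filter (fun e => v ∈ e)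

noncomputable def DefE : Finset (Sym2 α) := Tf.filter (fun e => ∃ x ∈ e, Special Tf x)

noncomputable def Sp : Finset α := Finset.univ.filter (Special Tf)

noncomputable def NTw (w₀ : α) : Finset α := Finset.univ.filter (fun z => s(w₀, z) ∈ Tf)

/-- the Hall relation -/
noncomputable def rel (w₀ : α) (v : α) : Finset (Sym2 α) :=
  if Special Tf v then starv Tf v ∪ ((Tf \ starv Tf w₀) \ DefE Tf) else starv Tf v

section hall

variable (hnl : ∀ e ∈ Tf, ¬ e.IsDiag) (hcard : Tf.card = Fintype.card α)
variable (w₀ : α) (hw₀ : ¬ Special Tf w₀)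

include hnl

lemma card_NTw : (NTw Tf w₀).card = (starv Tf w₀).card := by
  apply Finset.card_bij (fun z _ => s(w₀, z))
  · intro z hz
    rw [NTw, mem_filter] at hz
    exact mem_filter.2 ⟨hz.2, by simp⟩
  · intro z hz z' hz' heq
    rw [Sym2.eq_iff] at heq
    rcases heq with ⟨-, h⟩ | ⟨h1, h2⟩
    · exact h
    · rw [← h1, h2]
  · intro e he
    rw [starv, mem_filter] at he
    obtain ⟨he1, he2⟩ := he
    refine ⟨Sym2.Mem.other' he2, ?_, ?_⟩
    · rw [NTw, mem_filter]
      exact ⟨Finset.mem_univ _, by rw [Sym2.other_spec' he2]; exact he1⟩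
    · exact Sym2.other_spec' he2

lemma w₀_not_NTw : w₀ ∉ NTw Tf w₀ := by
  rw [NTw, mem_filter]
  rintro ⟨-, h⟩
  exact hnl _ h (by simp [Sym2.isDiag_iff_proj_eq])

omit hnl

lemma NTw_disj_Sp (z : α) (hz : z ∈ NTw Tf w₀) (hzs : z ∈ Sp Tf) : Special Tf w₀ := by
  rw [NTw, mem_filter] at hz
  rw [Sp, mem_filter] at hzs
  exact (special_congr_edge Tf hz.2 (by simp) (by simp)).2 hzs.2

include hnl hcard hw₀

lemma hall_condition : ∀ A : Finset α, A.card ≤ (A.biUnion (rel Tf w₀)).card := by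
  intro A
  have hstar_rel : ∀ x ∈ A, starv Tf x ⊆ A.biUnion (rel Tf w₀) := by
    intro x hx e he
    refine Finset.mem_biUnion.2 ⟨x, hx, ?_⟩
    rw [rel]
    split
    · exact Finset.mem_union_left _ he
    · exact he
  by_cases hsp : ∀ x ∈ A, ¬ Special Tf x
  · -- all normal
    have h1 : touch Tf A ⊆ A.biUnion (rel Tf w₀) := by
      intro e he
      rw [touch, mem_filter] at he
      obtain ⟨he1, x, hx1, hx2⟩ := he
      exact hstar_rel x hx2 (mem_filter.2 ⟨he1, hx1⟩)
    exact le_trans (count_normal Tf A hsp) (Finset.card_le_card h1)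
  · push_neg at hsp
    obtain ⟨v₀, hv₀A, hv₀⟩ := hsp
    set E₁ : Finset (Sym2 α) := (Tf \ starv Tf w₀) \ DefE Tf with hE₁
    set E₂ : Finset (Sym2 α) := touch Tf (A ∩ Sp Tf) with hE₂
    set E₃ : Finset (Sym2 α) := (starv Tf w₀).filter (fun e => ∃ x ∈ e, x ∈ A) with hE₃
    have hsub1 : E₁ ⊆ A.biUnion (rel Tf w₀) := by
      intro e he
      refine Finset.mem_biUnion.2 ⟨v₀, hv₀A, ?_⟩
      rw [rel, if_pos hv₀]
      exact Finset.mem_union_right _ he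
    have hsub2 : E₂ ⊆ A.biUnion (rel Tf w₀) := by
      intro e he
      rw [hE₂, touch, mem_filter] at he
      obtain ⟨he1, x, hx1, hx2⟩ := he
      exact hstar_rel x (Finset.mem_inter.1 hx2).1 (mem_filter.2 ⟨he1, hx1⟩)
    have hsub3 : E₃ ⊆ A.biUnion (rel Tf w₀) := by
      intro e he
      rw [hE₃, mem_filter] at he
      obtain ⟨hes, x, hx1, hx2⟩ := he
      exact hstar_rel x hx2 (mem_filter.2 ⟨(mem_filter.1 hes).1, hx1⟩)
    have hd12 : Disjoint E₁ E₂ := by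
      rw [Finset.disjoint_left]
      intro e h1 h2
      rw [hE₁] at h1
      rw [hE₂, touch, mem_filter] at h2
      obtain ⟨he1, x, hx1, hx2⟩ := h2
      refine (Finset.mem_sdiff.1 h1).2 ?_
      rw [DefE, mem_filter]
      exact ⟨he1, x, hx1, (mem_filter.1 (Finset.mem_inter.1 hx2).2).2⟩
    have hd13 : Disjoint E₁ E₃ := by
      rw [Finset.disjoint_left]
      intro e h1 h3
      rw [hE₃, mem_filter] at h3
      exact (Finset.mem_sdiff.1 (Finset.mem_sdiff.1 h1).1).2 h3.1
    have hd23 : Disjoint E₂ E₃ := by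
      rw [Finset.disjoint_left]
      intro e h2 h3
      rw [hE₂, touch, mem_filter] at h2
      rw [hE₃, mem_filter] at h3
      obtain ⟨he1, x, hx1, hx2⟩ := h2
      have hw₀e : w₀ ∈ e := (mem_filter.1 h3.1).2
      apply hw₀
      refine (special_congr_edge Tf he1 hx1 hw₀e).1 ?_
      exact (mem_filter.1 (Finset.mem_inter.1 hx2).2).2
    -- lower bounds
    have hb1 : Tf.card ≤ E₁.card + (starv Tf w₀).card + (DefE Tf).card := by
      have : Tf ⊆ E₁ ∪ starv Tf w₀ ∪ DefE Tf := by
        intro e he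
        by_cases h1 : e ∈ DefE Tf
        · exact Finset.mem_union_right _ h1
        by_cases h2 : e ∈ starv Tf w₀
        · exact Finset.mem_union_left _ (Finset.mem_union_right _ h2)
        · exact Finset.mem_union_left _ (Finset.mem_union_left _
            (Finset.mem_sdiff.2 ⟨Finset.mem_sdiff.2 ⟨he, h2⟩, h1⟩))
      calc Tf.card ≤ (E₁ ∪ starv Tf w₀ ∪ DefE Tf).card := Finset.card_le_card this
        _ ≤ (E₁ ∪ starv Tf w₀).card + (DefE Tf).card := Finset.card_union_le _ _
        _ ≤ E₁.card + (starv Tf w₀).card + (DefE Tf).card := by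
            have := Finset.card_union_le E₁ (starv Tf w₀)
            omega
    have hb2 : (DefE Tf).card ≤ E₂.card + (Sp Tf \ A).card := by
      have hsubi : DefE Tf \ E₂ ⊆ inside Tf (Sp Tf \ A) := by
        intro e he
        rw [Finset.mem_sdiff] at he
        obtain ⟨h1, h2⟩ := he
        rw [DefE, mem_filter] at h1
        obtain ⟨he1, x, hx1, hx2⟩ := h1
        rw [inside, mem_filter]
        refine ⟨he1, fun y hy => ?_⟩
        have hysp : Special Tf y := (special_congr_edge Tf he1 hx1 hy).1 hx2
        refine Finset.mem_sdiff.2 ⟨mem_filter.2 ⟨Finset.mem_univ y, hysp⟩, fun hyA => ?_⟩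
        apply h2
        rw [hE₂, touch, mem_filter]
        exact ⟨he1, y, hy, Finset.mem_inter.2 ⟨hyA, mem_filter.2 ⟨Finset.mem_univ y, hysp⟩⟩⟩
      have hins : (inside Tf (Sp Tf \ A)).card ≤ (Sp Tf \ A).card := by
        rcases (Sp Tf \ A).eq_empty_or_nonempty with hemp | hne
        · rw [hemp]
          have : inside Tf (∅ : Finset α) = ∅ := by
            ext e
            simp only [inside, mem_filter, Finset.notMem_empty, iff_false, not_and]
            intro he h2
            obtain ⟨x, hx⟩ := sym2_exists_mem e
            exact h2 x hx
          rw [this]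
          exact le_rfl
        · have := count_special_inside Tf (Sp Tf \ A) (fun x hx =>
            (mem_filter.1 (Finset.mem_sdiff.1 hx).1).2) hne
          omega
      have := Finset.card_le_card hsubi
      have h4 : (DefE Tf).card ≤ E₂.card + (DefE Tf \ E₂).card := by
        have := Finset.card_le_card (show DefE Tf ⊆ E₂ ∪ (DefE Tf \ E₂) by
          intro e he
          by_cases h : e ∈ E₂
          · exact Finset.mem_union_left _ h
          · exact Finset.mem_union_right _ (Finset.mem_sdiff.2 ⟨he, h⟩))
        have h5 := Finset.card_union_le E₂ (DefE Tf \ E₂)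
        omega
      omega
    have hb3 : (A ∩ NTw Tf w₀).card ≤ E₃.card := by
      apply Finset.card_le_card_of_injOn (fun z => s(w₀, z))
      · intro z hz
        rw [Finset.mem_coe, Finset.mem_inter] at hz
        obtain ⟨hzA, hzN⟩ := hz
        rw [NTw, mem_filter] at hzN
        rw [hE₃, Finset.mem_coe, mem_filter]
        exact ⟨mem_filter.2 ⟨hzN.2, by simp⟩, z, by simp, hzA⟩
      · intro z hz z' hz' heq
        simp only [Sym2.eq_iff] at heq
        rcases heq with ⟨-, h⟩ | ⟨h1, h2⟩
        · exact h
        · rw [← h1, h2]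
    have hb3' : w₀ ∈ A → E₃ = starv Tf w₀ := by
      intro hw₀A
      apply Finset.Subset.antisymm (Finset.filter_subset _ _)
      intro e he
      exact mem_filter.2 ⟨he, w₀, (mem_filter.1 he).2, hw₀A⟩
    -- upper bound for A
    set Rest : Finset α := ((Finset.univ \ {w₀}) \ NTw Tf w₀) \ Sp Tf with hRest
    have hAsub : A ⊆ (A ∩ {w₀}) ∪ (A ∩ NTw Tf w₀) ∪ (A ∩ Sp Tf) ∪ Rest := by
      intro x hx
      by_cases h1 : x = w₀
      · subst h1
        exact Finset.mem_union_left _ (Finset.mem_union_left _ (Finset.mem_union_left _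
          (Finset.mem_inter.2 ⟨hx, Finset.mem_singleton_self x⟩)))
      by_cases h2 : x ∈ NTw Tf w₀
      · exact Finset.mem_union_left _ (Finset.mem_union_left _ (Finset.mem_union_right _
          (Finset.mem_inter.2 ⟨hx, h2⟩)))
      by_cases h3 : x ∈ Sp Tf
      · exact Finset.mem_union_left _ (Finset.mem_union_right _ (Finset.mem_inter.2 ⟨hx, h3⟩))
      · refine Finset.mem_union_right _ ?_
        rw [hRest]
        refine Finset.mem_sdiff.2 ⟨Finset.mem_sdiff.2 ⟨Finset.mem_sdiff.2
          ⟨Finset.mem_univ x, ?_⟩, h2⟩, h3⟩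
        simpa using h1
    have hAcard : A.card ≤ (A ∩ {w₀}).card + (A ∩ NTw Tf w₀).card + (A ∩ Sp Tf).card
        + Rest.card := by
      calc A.card ≤ _ := Finset.card_le_card hAsub
        _ ≤ _ := Finset.card_union_le _ _
        _ ≤ _ + _ + _ := by
            have h5 := Finset.card_union_le ((A ∩ {w₀}) ∪ (A ∩ NTw Tf w₀)) (A ∩ Sp Tf)
            have h6 := Finset.card_union_le (A ∩ {w₀}) (A ∩ NTw Tf w₀)
            omega
    have hRestcard : Rest.card + 1 + (NTw Tf w₀).card + (Sp Tf).card = Fintype.card α := by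
      rw [hRest]
      have hsub_a : ({w₀} : Finset α) ⊆ Finset.univ := Finset.subset_univ _
      have hsub_b : NTw Tf w₀ ⊆ Finset.univ \ {w₀} := by
        intro z hz
        refine Finset.mem_sdiff.2 ⟨Finset.mem_univ z, ?_⟩
        rw [Finset.mem_singleton]
        intro h
        exact w₀_not_NTw Tf hnl _ (by rwa [h] at hz)
      have hsub_c : Sp Tf ⊆ (Finset.univ \ {w₀}) \ NTw Tf w₀ := by
        intro z hz
        refine Finset.mem_sdiff.2 ⟨Finset.mem_sdiff.2 ⟨Finset.mem_univ z, ?_⟩, ?_⟩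
        · rw [Finset.mem_singleton]
          rintro rfl
          exact hw₀ (mem_filter.1 hz).2
        · intro hzN
          exact hw₀ (NTw_disj_Sp Tf w₀ z hzN hz)
      rw [Finset.card_sdiff_of_subset hsub_c, Finset.card_sdiff_of_subset hsub_b, Finset.card_sdiff_of_subset hsub_a]
      have c1 : (Sp Tf).card ≤ ((Finset.univ \ {w₀}) \ NTw Tf w₀).card :=
        Finset.card_le_card hsub_c
      have c2 : (NTw Tf w₀).card ≤ (Finset.univ \ {w₀}).card := Finset.card_le_card hsub_b
      have c3 : ({w₀} : Finset α).card ≤ (Finset.univ : Finset α).card :=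
        Finset.card_le_card hsub_a
      rw [Finset.card_sdiff_of_subset hsub_b, Finset.card_sdiff_of_subset hsub_a] at c1
      rw [Finset.card_sdiff_of_subset hsub_a] at c2
      simp only [Finset.card_singleton, Finset.card_univ] at c1 c2 c3 ⊢
      omega
    -- assemble
    have hNsum : E₁.card + E₂.card + E₃.card ≤ (A.biUnion (rel Tf w₀)).card := by
      have hsubU : E₁ ∪ E₂ ∪ E₃ ⊆ A.biUnion (rel Tf w₀) := by
        intro e he
        rcases Finset.mem_union.1 he with he | he
        · rcases Finset.mem_union.1 he with he | he
          · exact hsub1 he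
          · exact hsub2 he
        · exact hsub3 he
      have h1 := Finset.card_union_of_disjoint hd12
      have h2 : Disjoint (E₁ ∪ E₂) E₃ := Finset.disjoint_union_left.2 ⟨hd13, hd23⟩
      have h3 := Finset.card_union_of_disjoint h2
      have := Finset.card_le_card hsubU
      omega
    have hspcard : (Sp Tf \ A).card + (A ∩ Sp Tf).card = (Sp Tf).card := by
      rw [Finset.inter_comm]
      rw [Finset.card_sdiff_add_card_inter]
    have hstarNT := card_NTw Tf hnl w₀
    by_cases hw₀A : w₀ ∈ A
    · have hE₃card : E₃.card = (starv Tf w₀).card := by rw [hb3' hw₀A]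
      have hw1 : (A ∩ {w₀}).card ≤ 1 := by
        have : A ∩ {w₀} ⊆ {w₀} := Finset.inter_subset_right
        simpa using Finset.card_le_card this
      have hANT : (A ∩ NTw Tf w₀).card ≤ (NTw Tf w₀).card :=
        Finset.card_le_card Finset.inter_subset_right
      rw [hcard] at hb1
      omega
    · have hw1 : (A ∩ {w₀}).card = 0 := by
        rw [Finset.card_eq_zero]
        ext x
        simp only [Finset.mem_inter, Finset.mem_singleton, Finset.notMem_empty, iff_false,
          not_and]
        rintro hx rfl
        exact hw₀A hx
      rw [hcard] at hb1
      omega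

end hall

lemma other'_mk {a b : α} (hab : a ≠ b) (h : a ∈ s(a, b)) : Sym2.Mem.other' h = b := by
  have := Sym2.other_spec' h
  rw [Sym2.eq_iff] at this
  rcases this with ⟨-, h2⟩ | ⟨h1, h2⟩
  · exact h2
  · exact absurd h1 hab

noncomputable def pickv (e : Sym2 α) : α := Classical.choose (sym2_exists_mem e)

lemma pickv_mem (e : Sym2 α) : pickv e ∈ e := Classical.choose_spec (sym2_exists_mem e)

section build

variable (g : α → Sym2 α) (w₀ y₀ z_tb : α)

/-- the special-branch helper, `z` the special endpoint, `a` the other one. -/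
noncomputable def spb (z a : α) : Option (Sym2 α) :=
  if g z = s(y₀, a) then some (g a)
  else if a = z_tb ∧ y₀ ∈ g z then some (g y₀)
  else if y₀ ∉ g z ∧ z ∉ g z ∧ a = pickv (g z) then some (g z)
  else none

/-- the owner function assigning auxiliary edges to members of `Tf` -/
noncomputable def owner (ε : Sym2 α) : Option (Sym2 α) :=
  if h : w₀ ∈ ε then some (g (Sym2.Mem.other' h))
  else if h : y₀ ∈ ε then
    (if Special Tf (Sym2.Mem.other' h) ∧ y₀ ∈ g (Sym2.Mem.other' h)
      then some (g (Sym2.Mem.other' h)) else some (g y₀))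
  else if h : ∃ x, x ∈ ε ∧ Special Tf x then
    spb g y₀ z_tb (Classical.choose h) (Sym2.Mem.other' (Classical.choose_spec h).1)
  else none

/-- the traversal family member attached to `q` -/
def Sset (q : Sym2 α) : Set (Sym2 α) :=
  insert q {ε | ¬ ε.IsDiag ∧ ε ∉ Tf ∧ owner Tf g w₀ y₀ z_tb ε = some q}

lemma owner_eval_w₀ {z : α} (hz : z ≠ w₀) : owner Tf g w₀ y₀ z_tb s(w₀, z) = some (g z) := by
  have h : w₀ ∈ s(w₀, z) := by simp
  rw [owner, dif_pos h, other'_mk (Ne.symm hz) h]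

lemma owner_eval_y₀ {z : α} (hzw : z ≠ w₀) (hzy : z ≠ y₀) (hwy : w₀ ≠ y₀) :
    owner Tf g w₀ y₀ z_tb s(y₀, z)
      = (if Special Tf z ∧ y₀ ∈ g z then some (g z) else some (g y₀)) := by
  have hnw : w₀ ∉ s(y₀, z) := by
    rw [Sym2.mem_iff]
    push_neg
    exact ⟨hwy, fun h => hzw h.symm⟩
  have h : y₀ ∈ s(y₀, z) := by simp
  rw [owner, dif_neg hnw, dif_pos h, other'_mk (Ne.symm hzy) h]

lemma owner_eval_sp {a z : α} (haz : a ≠ z) (hwa : w₀ ≠ a) (hwz : w₀ ≠ z)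
    (hya : y₀ ≠ a) (hyz : y₀ ≠ z) (hzs : Special Tf z) (has : ¬ Special Tf a) :
    owner Tf g w₀ y₀ z_tb s(a, z) = spb g y₀ z_tb z a := by
  have hnw : w₀ ∉ s(a, z) := by
    rw [Sym2.mem_iff]; push_neg; exact ⟨hwa, hwz⟩
  have hny : y₀ ∉ s(a, z) := by
    rw [Sym2.mem_iff]; push_neg; exact ⟨hya, hyz⟩
  have hex : ∃ x, x ∈ s(a, z) ∧ Special Tf x := ⟨z, by simp, hzs⟩
  rw [owner, dif_neg hnw, dif_neg hny, dif_pos hex]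
  have hspec := Sym2.other_spec' (Classical.choose_spec hex).1
  rw [Sym2.eq_iff] at hspec
  rcases hspec with ⟨h1, h2⟩ | ⟨h1, h2⟩
  · exact absurd (h1 ▸ (Classical.choose_spec hex).2) has
  · rw [h2, h1]

variable (hnl : ∀ e ∈ Tf, ¬ e.IsDiag) (hw₀ : ¬ Special Tf w₀)
variable (hgmem : ∀ v, g v ∈ Tf) (hginj : Function.Injective g)
variable (hgrel : ∀ v, v ∈ g v ∨ (Special Tf v ∧ w₀ ∉ g v ∧ ∀ x ∈ g v, ¬ Special Tf x))
variable (hgsurj : ∀ t ∈ Tf, ∃ v, g v = t)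
variable (hy₀ : s(w₀, y₀) = g w₀) (hztb : s(y₀, z_tb) = g y₀)

lemma edge_ne {a b : α} (hnl : ∀ e ∈ Tf, ¬ e.IsDiag) (h : s(a, b) ∈ Tf) : a ≠ b := by
  intro hab
  exact hnl _ h (by simp [hab, Sym2.isDiag_iff_proj_eq])

include hnl hgmem hy₀ in
lemma w₀_ne_y₀ : w₀ ≠ y₀ := edge_ne Tf hnl (hy₀ ▸ hgmem w₀)

include hnl hgmem hztb in
lemma y₀_ne_ztb : y₀ ≠ z_tb := edge_ne Tf hnl (hztb ▸ hgmem y₀)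

include hw₀ hgmem hy₀ in
lemma y₀_norm : ¬ Special Tf y₀ := by
  intro h
  apply hw₀
  refine (special_congr_edge Tf (hgmem w₀) ?_ ?_).1 h
  · rw [← hy₀]; simp
  · rw [← hy₀]; simp

include hw₀ hgmem hy₀ hztb in
lemma ztb_norm : ¬ Special Tf z_tb := by
  intro h
  apply y₀_norm Tf g w₀ y₀ hw₀ hgmem hy₀
  refine (special_congr_edge Tf (hgmem y₀) ?_ ?_).1 h
  · rw [← hztb]; simp
  · rw [← hztb]; simp

include hnl hgmem hginj hy₀ hztb in
lemma ztb_ne_w₀ : z_tb ≠ w₀ := by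
  intro h
  have : g y₀ = g w₀ := by
    rw [← hy₀, ← hztb, h, Sym2.eq_swap]
  exact w₀_ne_y₀ Tf g w₀ y₀ hnl hgmem hy₀ (hginj this).symm

include hgrel in
lemma disp_facts {v : α} (hv : v ∉ g v) :
    Special Tf v ∧ w₀ ∉ g v ∧ ∀ x ∈ g v, ¬ Special Tf x := by
  rcases hgrel v with h | h
  · exact absurd h hv
  · exact h

include hgrel in
lemma norm_mem {v : α} (hv : ¬ Special Tf v) : v ∈ g v := by
  rcases hgrel v with h | h
  · exact h
  · exact absurd h.1 hv

include hw₀ hgrel in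
lemma w₀_mem : w₀ ∈ g w₀ := norm_mem Tf g w₀ hgrel hw₀

lemma mem_Sset_self (q : Sym2 α) : q ∈ Sset Tf g w₀ y₀ z_tb q := Set.mem_insert _ _

lemma mem_Sset_junk {q ε : Sym2 α} (h1 : ¬ ε.IsDiag) (h2 : ε ∉ Tf)
    (h3 : owner Tf g w₀ y₀ z_tb ε = some q) : ε ∈ Sset Tf g w₀ y₀ z_tb q :=
  Set.mem_insert_iff.2 (Or.inr ⟨h1, h2, h3⟩)

include hnl hw₀ hgmem hgrel in
lemma ch2_mem {v : α} (hv : v ∉ g v) : s(w₀, v) ∈ Sset Tf g w₀ y₀ z_tb (g v) := by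
  obtain ⟨hsp, hw, hall⟩ := disp_facts Tf g w₀ hgrel hv
  have hvw : v ≠ w₀ := by
    intro h
    rw [h] at hv
    exact hv (w₀_mem Tf g w₀ hw₀ hgrel)
  refine mem_Sset_junk Tf g w₀ y₀ z_tb ?_ ?_ ?_
  · simp only [Sym2.isDiag_iff_proj_eq]
    exact fun h => hvw h.symm
  · intro hTf
    exact hw₀ ((special_congr_edge Tf hTf (by simp) (by simp)).1 hsp)
  · exact owner_eval_w₀ Tf g w₀ y₀ z_tb hvw

include hgmem in
lemma nonmixed {a b : α} (h1 : ¬ Special Tf a) (h2 : Special Tf b) : s(a, b) ∉ Tf := by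
  intro h
  exact h1 ((special_congr_edge Tf h (by simp) (by simp)).1 h2)

include hnl hw₀ hgmem hgrel hy₀ in
lemma ch1_mem {v : α} (hv : v ∉ g v) :
    (if y₀ ∈ g v then s(y₀, v) else s(pickv (g v), v)) ∈ Sset Tf g w₀ y₀ z_tb (g v) := by
  obtain ⟨hsp, hw, hall⟩ := disp_facts Tf g w₀ hgrel hv
  have hynorm : ¬ Special Tf y₀ := y₀_norm Tf g w₀ y₀ hw₀ hgmem hy₀
  have hyv : y₀ ≠ v := fun h => hynorm (h ▸ hsp)
  have hwv : w₀ ≠ v := fun h => hw₀ (h ▸ hsp)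
  by_cases hym : y₀ ∈ g v
  · rw [if_pos hym]
    refine mem_Sset_junk Tf g w₀ y₀ z_tb ?_ (nonmixed Tf g hgmem hynorm hsp) ?_
    · simp only [Sym2.isDiag_iff_proj_eq]
      exact hyv
    · rw [owner_eval_y₀ Tf g w₀ y₀ z_tb (fun h => hwv h.symm) (fun h => hyv h.symm)
        (w₀_ne_y₀ Tf g w₀ y₀ hnl hgmem hy₀), if_pos ⟨hsp, hym⟩]
  · rw [if_neg hym]
    have ha : pickv (g v) ∈ g v := pickv_mem (g v)
    have hanorm : ¬ Special Tf (pickv (g v)) := hall _ ha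
    have hav : pickv (g v) ≠ v := fun h => hanorm (by rw [h]; exact hsp)
    refine mem_Sset_junk Tf g w₀ y₀ z_tb ?_ (nonmixed Tf g hgmem hanorm hsp) ?_
    · simp only [Sym2.isDiag_iff_proj_eq]
      exact hav
    · rw [owner_eval_sp Tf g w₀ y₀ z_tb hav
        (fun h => hw (h ▸ ha)) hwv (fun h => hym (h ▸ ha)) hyv hsp hanorm, spb]
      rw [if_neg, if_neg, if_pos ⟨hym, hv, rfl⟩]
      · rintro ⟨-, h⟩
        exact hym h
      · intro h
        apply hym
        rw [h]
        simp

include hnl hw₀ hgmem hginj hgrel hgsurj hy₀ in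
lemma span_w₀ {q : Sym2 α} (hq : q ∈ Tf) (hqt : q ≠ g y₀) :
    ∃ ε ∈ Sset Tf g w₀ y₀ z_tb q, w₀ ∈ ε := by
  obtain ⟨v, hv⟩ := hgsurj q hq
  by_cases hvq : v ∈ g v
  · by_cases hwq : w₀ ∈ q
    · exact ⟨q, mem_Sset_self Tf g w₀ y₀ z_tb q, hwq⟩
    · have hvw : v ≠ w₀ := by
        intro h
        rw [h] at hv
        rw [← hv] at hwq
        exact hwq (w₀_mem Tf g w₀ hw₀ hgrel)
      refine ⟨s(w₀, v), mem_Sset_junk Tf g w₀ y₀ z_tb ?_ ?_ ?_, by simp⟩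
      · simp only [Sym2.isDiag_iff_proj_eq]
        exact fun h => hvw h.symm
      · intro hTf
        obtain ⟨v', hv'⟩ := hgsurj _ hTf
        rcases hgrel v' with hmem | ⟨-, hnw, -⟩
        · rw [hv'] at hmem
          rw [Sym2.mem_iff] at hmem
          rcases hmem with h | h
          · rw [h] at hv'
            rw [← hy₀] at hv'
            rw [Sym2.eq_iff] at hv'
            rcases hv' with ⟨-, h2⟩ | ⟨-, h2⟩
            · rw [← h2] at hv
              exact hqt hv.symm
            · exact (w₀_ne_y₀ Tf g w₀ y₀ hnl hgmem hy₀) h2.symm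
          · rw [h] at hv'
            rw [hv] at hv'
            apply hwq
            rw [hv']
            simp
        · rw [hv'] at hnw
          exact hnw (by simp)
      · rw [owner_eval_w₀ Tf g w₀ y₀ z_tb hvw, hv]
  · exact ⟨s(w₀, v), hv ▸ ch2_mem Tf g w₀ y₀ z_tb hnl hw₀ hgmem hgrel hvq, by simp⟩

include hw₀ hgmem hgrel hy₀ hztb in
lemma owner_structure {ε q : Sym2 α} (hTf : ε ∉ Tf)
    (ho : owner Tf g w₀ y₀ z_tb ε = some q) :
    (∃ x, x ∈ ε ∧ x ∈ q) ∨ (∃ v, v ∉ g v ∧ g v = q ∧ ε = s(w₀, v)) := by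
  rw [owner] at ho
  split at ho
  case isTrue h =>
    have hq := Option.some.inj ho
    by_cases hzz : Sym2.Mem.other' h ∈ g (Sym2.Mem.other' h)
    · exact Or.inl ⟨Sym2.Mem.other' h, Sym2.other_mem' h, hq ▸ hzz⟩
    · exact Or.inr ⟨Sym2.Mem.other' h, hzz, hq, (Sym2.other_spec' h).symm⟩
  case isFalse hnw =>
    split at ho
    case isTrue h =>
      split at ho
      case isTrue hcond =>
        have hq := Option.some.inj ho
        exact Or.inl ⟨y₀, h, hq ▸ hcond.2⟩
      case isFalse hcond =>
        have hq := Option.some.inj ho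
        refine Or.inl ⟨y₀, h, ?_⟩
        rw [← hq, ← hztb]
        simp
    case isFalse hny =>
      split at ho
      case isTrue hex =>
        rw [spb] at ho
        have hoe : Sym2.Mem.other' (Classical.choose_spec hex).1 ∈ ε :=
          Sym2.other_mem' _
        have hcs : Special Tf (Classical.choose hex) := (Classical.choose_spec hex).2
        split at ho
        case isTrue hb1 =>
          have hq := Option.some.inj ho
          have honorm : ¬ Special Tf (Sym2.Mem.other' (Classical.choose_spec hex).1) := by
            intro hos
            refine y₀_norm Tf g w₀ y₀ hw₀ hgmem hy₀ ?_
            refine (special_congr_edge Tf (hgmem (Classical.choose hex))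
              (by rw [hb1]; simp) (by rw [hb1]; simp)).1 hos
          exact Or.inl ⟨_, hoe, hq ▸ norm_mem Tf g w₀ hgrel honorm⟩
        case isFalse =>
          split at ho
          case isTrue hb2 =>
            have hq := Option.some.inj ho
            refine Or.inl ⟨_, hoe, ?_⟩
            rw [← hq, ← hztb, hb2.1]
            simp
          case isFalse =>
            split at ho
            case isTrue hb3 =>
              have hq := Option.some.inj ho
              refine Or.inl ⟨_, hoe, ?_⟩
              rw [← hq, hb3.2.2]
              exact pickv_mem _
            case isFalse h4 => exact absurd ho (by simp)
      case isFalse => exact absurd ho (by simp)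

include hnl hw₀ hgmem hgrel hy₀ hztb in
lemma Sset_connected (q : Sym2 α) : EdgesConnected (Sset Tf g w₀ y₀ z_tb q) := by
  set F := Sset Tf g w₀ y₀ z_tb q with hF
  refine ⟨⟨q, mem_Sset_self Tf g w₀ y₀ z_tb q⟩, ?_⟩
  have hsym : Symmetric (fun a b => a ∈ F ∧ b ∈ F ∧ ∃ v : α, v ∈ a ∧ v ∈ b) := by
    rintro a b ⟨h1, h2, v, hv1, hv2⟩
    exact ⟨h2, h1, v, hv2, hv1⟩
  have key : ∀ ε ∈ F, Relation.ReflTransGen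
      (fun a b => a ∈ F ∧ b ∈ F ∧ ∃ v : α, v ∈ a ∧ v ∈ b) q ε := by
    intro ε hε
    rcases Set.mem_insert_iff.1 hε with rfl | ⟨hd, hTf, ho⟩
    · exact Relation.ReflTransGen.refl
    rcases owner_structure Tf g w₀ y₀ z_tb hw₀ hgmem hgrel hy₀ hztb hTf ho with
      ⟨x, hx1, hx2⟩ | ⟨v, hv, hgv, hεeq⟩
    · exact Relation.ReflTransGen.single
        ⟨mem_Sset_self Tf g w₀ y₀ z_tb q, hε, x, hx2, hx1⟩
    · have hch1 : (if y₀ ∈ g v then s(y₀, v) else s(pickv (g v), v)) ∈ F := by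
        rw [hF, ← hgv]
        exact ch1_mem Tf g w₀ y₀ z_tb hnl hw₀ hgmem hgrel hy₀ hv
      have step1 : Relation.ReflTransGen
          (fun a b => a ∈ F ∧ b ∈ F ∧ ∃ v : α, v ∈ a ∧ v ∈ b) q
          (if y₀ ∈ g v then s(y₀, v) else s(pickv (g v), v)) := by
        refine Relation.ReflTransGen.single
          ⟨mem_Sset_self Tf g w₀ y₀ z_tb q, hch1, ?_⟩
        by_cases hym : y₀ ∈ g v
        · rw [if_pos hym]
          exact ⟨y₀, hgv ▸ hym, by simp⟩
        · rw [if_neg hym]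
          exact ⟨pickv (g v), hgv ▸ pickv_mem (g v), by simp⟩
      refine step1.tail ⟨hch1, hε, v, ?_, by rw [hεeq]; simp⟩
      by_cases hym : y₀ ∈ g v
      · rw [if_pos hym]; simp
      · rw [if_neg hym]; simp
  intro e he f hf
  exact Relation.ReflTransGen.trans
    ((@Relation.ReflTransGen.stdSymm _ _ ⟨fun a b h => hsym h⟩).symm _ _ (key e he)) (key f hf)

include hnl hw₀ hgmem hy₀ in
lemma tbad_y₀junk {z : α} (hz1 : z ≠ w₀) (hz2 : z ≠ y₀)
    (h3 : ¬(Special Tf z ∧ y₀ ∈ g z)) (h4 : s(y₀, z) ∉ Tf) :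
    s(y₀, z) ∈ Sset Tf g w₀ y₀ z_tb (g y₀) := by
  refine mem_Sset_junk Tf g w₀ y₀ z_tb ?_ h4 ?_
  · simp only [Sym2.isDiag_iff_proj_eq]
    exact fun h => hz2 h.symm
  · rw [owner_eval_y₀ Tf g w₀ y₀ z_tb hz1 hz2 (w₀_ne_y₀ Tf g w₀ y₀ hnl hgmem hy₀),
      if_neg h3]

include hnl hw₀ hgmem hgrel hy₀ in
lemma rp1_mem {vf vq : α} (hvf : vf ∉ g vf) (hfq : g vf = s(y₀, vq)) :
    s(vq, vf) ∈ Sset Tf g w₀ y₀ z_tb (g vq) := by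
  obtain ⟨hsp, hw, hall⟩ := disp_facts Tf g w₀ hgrel hvf
  have hvqn : ¬ Special Tf vq := hall vq (by rw [hfq]; simp)
  have hyvq : y₀ ≠ vq := edge_ne Tf hnl (hfq ▸ hgmem vf)
  have hynorm : ¬ Special Tf y₀ := y₀_norm Tf g w₀ y₀ hw₀ hgmem hy₀
  refine mem_Sset_junk Tf g w₀ y₀ z_tb ?_ (nonmixed Tf g hgmem hvqn hsp) ?_
  · simp only [Sym2.isDiag_iff_proj_eq]
    exact fun h => hvqn (by rw [h]; exact hsp)
  · rw [owner_eval_sp Tf g w₀ y₀ z_tb (fun h => hvqn (by rw [h]; exact hsp))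
      (fun h => hw (by rw [hfq, ← h]; simp)) (fun h => hw₀ (by rw [h]; exact hsp)) hyvq
      (fun h => hynorm (by rw [h]; exact hsp)) hsp hvqn, spb, if_pos hfq]

include hnl hw₀ hgmem hginj hgrel hy₀ hztb in
lemma rp2_mem {vf vq : α} (hvf : vf ∉ g vf) (hfq : g vf = s(y₀, vq)) :
    s(z_tb, vf) ∈ Sset Tf g w₀ y₀ z_tb (g y₀) := by
  obtain ⟨hsp, hw, hall⟩ := disp_facts Tf g w₀ hgrel hvf
  have hzn : ¬ Special Tf z_tb := ztb_norm Tf g w₀ y₀ z_tb hw₀ hgmem hy₀ hztb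
  have hynorm : ¬ Special Tf y₀ := y₀_norm Tf g w₀ y₀ hw₀ hgmem hy₀
  refine mem_Sset_junk Tf g w₀ y₀ z_tb ?_ (nonmixed Tf g hgmem hzn hsp) ?_
  · simp only [Sym2.isDiag_iff_proj_eq]
    exact fun h => hzn (by rw [h]; exact hsp)
  · rw [owner_eval_sp Tf g w₀ y₀ z_tb (fun h => hzn (by rw [h]; exact hsp))
      (fun h => (ztb_ne_w₀ Tf g w₀ y₀ z_tb hnl hgmem hginj hy₀ hztb) h.symm)
      (fun h => hw₀ (by rw [h]; exact hsp)) (fun h => (y₀_ne_ztb Tf g y₀ z_tb hnl hgmem hztb) h)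
      (fun h => hynorm (by rw [h]; exact hsp)) hsp hzn, spb]
    rw [if_neg, if_pos ⟨rfl, by rw [hfq]; simp⟩]
    · intro h
      rw [hztb] at h
      have := hginj h
      rw [this] at hsp
      exact hynorm hsp

include hgmem hztb in
lemma y₀_mem_gy₀ : y₀ ∈ g y₀ := by rw [← hztb]; simp

lemma edgesIncident_symm {F F' : Set (Sym2 α)} (h : EdgesIncident F F') :
    EdgesIncident F' F := by
  obtain ⟨e, he, f, hf, v, hv1, hv2⟩ := h
  exact ⟨f, hf, e, he, v, hv2, hv1⟩

include hnl hw₀ hgmem hginj hgrel hgsurj hy₀ hztb in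
lemma tbad_incident {q : Sym2 α} (hq : q ∈ Tf) (hqt : q ≠ g y₀) :
    EdgesIncident (Sset Tf g w₀ y₀ z_tb (g y₀)) (Sset Tf g w₀ y₀ z_tb q) := by
  obtain ⟨vq, hvq⟩ := hgsurj q hq
  have hself : g y₀ ∈ Sset Tf g w₀ y₀ z_tb (g y₀) := mem_Sset_self Tf g w₀ y₀ z_tb _
  have hqself : q ∈ Sset Tf g w₀ y₀ z_tb q := mem_Sset_self Tf g w₀ y₀ z_tb q
  have hymem : y₀ ∈ g y₀ := y₀_mem_gy₀ Tf g y₀ z_tb hgmem hztb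
  have hynorm : ¬ Special Tf y₀ := y₀_norm Tf g w₀ y₀ hw₀ hgmem hy₀
  by_cases hdisp : vq ∈ g vq
  · by_cases hyq : y₀ ∈ q
    · exact ⟨g y₀, hself, q, hqself, y₀, hymem, hyq⟩
    · have hvqmem : vq ∈ q := hvq ▸ hdisp
      have hvqy : vq ≠ y₀ := fun h => hyq (h ▸ hvqmem)
      by_cases hfT : s(y₀, vq) ∈ Tf
      · obtain ⟨vf, hvf⟩ := hgsurj _ hfT
        by_cases hvfd : vf ∈ g vf
        · have hvfd2 := hvf ▸ hvfd
          rw [Sym2.mem_iff] at hvfd2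
          rcases hvfd2 with h | h
          · refine ⟨g y₀, hself, q, hqself, vq, ?_, hvqmem⟩
            rw [← h, hvf]
            simp
          · rw [h, hvq] at hvf
            exact absurd (by rw [hvf]; simp : y₀ ∈ q) hyq
        · refine ⟨s(z_tb, vf),
            rp2_mem Tf g w₀ y₀ z_tb hnl hw₀ hgmem hginj hgrel hy₀ hztb hvfd hvf,
            s(vq, vf), ?_, vf, by simp, by simp⟩
          rw [← hvq]
          exact rp1_mem Tf g w₀ y₀ z_tb hnl hw₀ hgmem hgrel hy₀ hvfd hvf
      · have hvqw : vq ≠ w₀ := by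
          intro h
          apply hyq
          rw [← hvq, h, ← hy₀]
          simp
        refine ⟨s(y₀, vq), tbad_y₀junk Tf g w₀ y₀ z_tb hnl hw₀ hgmem hy₀ hvqw hvqy
          ?_ hfT, q, hqself, vq, by simp, hvqmem⟩
        rintro ⟨-, hy⟩
        rw [hvq] at hy
        exact hyq hy
  · obtain ⟨hsp, hw, hall⟩ := disp_facts Tf g w₀ hgrel hdisp
    by_cases hyq : y₀ ∈ g vq
    · exact ⟨g y₀, hself, q, hqself, y₀, hymem, hvq ▸ hyq⟩
    · refine ⟨s(y₀, vq), tbad_y₀junk Tf g w₀ y₀ z_tb hnl hw₀ hgmem hy₀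
        (fun h => hw₀ (by rw [← h]; exact hsp)) (fun h => hynorm (by rw [← h]; exact hsp))
        (fun hc => hyq hc.2) (nonmixed Tf g hgmem hynorm hsp), s(w₀, vq), ?_, vq, by simp,
        by simp⟩
      rw [← hvq]
      exact ch2_mem Tf g w₀ y₀ z_tb hnl hw₀ hgmem hgrel hdisp

include hnl hw₀ hgmem hginj hgrel hgsurj hy₀ hztb in
lemma Sset_incident {p q : Sym2 α} (hp : p ∈ Tf) (hq : q ∈ Tf) (hpq : p ≠ q) :
    EdgesIncident (Sset Tf g w₀ y₀ z_tb p) (Sset Tf g w₀ y₀ z_tb q) := by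
  by_cases hpt : p = g y₀
  · rw [hpt]
    exact tbad_incident Tf g w₀ y₀ z_tb hnl hw₀ hgmem hginj hgrel hgsurj hy₀ hztb hq
      (by rw [← hpt]; exact fun h => hpq h.symm)
  by_cases hqt : q = g y₀
  · rw [hqt]
    apply edgesIncident_symm
    exact tbad_incident Tf g w₀ y₀ z_tb hnl hw₀ hgmem hginj hgrel hgsurj hy₀ hztb hp hpt
  · obtain ⟨ε₁, hε₁, hw1⟩ := span_w₀ Tf g w₀ y₀ z_tb hnl hw₀ hgmem hginj hgrel hgsurj hy₀
      hp hpt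
    obtain ⟨ε₂, hε₂, hw2⟩ := span_w₀ Tf g w₀ y₀ z_tb hnl hw₀ hgmem hginj hgrel hgsurj hy₀
      hq hqt
    exact ⟨ε₁, hε₁, ε₂, hε₂, w₀, hw1, hw2⟩

lemma Sset_T_unique {q ε : Sym2 α} (hε : ε ∈ Sset Tf g w₀ y₀ z_tb q) (hT : ε ∈ Tf) :
    ε = q := by
  rcases Set.mem_insert_iff.1 hε with h | ⟨-, h2, -⟩
  · exact h
  · exact absurd hT h2

lemma Sset_disjoint {p q : Sym2 α} (hp : p ∈ Tf) (hq : q ∈ Tf) (hpq : p ≠ q) :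
    Disjoint (Sset Tf g w₀ y₀ z_tb p) (Sset Tf g w₀ y₀ z_tb q) := by
  rw [Set.disjoint_left]
  intro ε h1 h2
  rcases Set.mem_insert_iff.1 h1 with rfl | ⟨-, hT1, ho1⟩
  · exact hpq (Sset_T_unique Tf g w₀ y₀ z_tb h2 hp)
  · rcases Set.mem_insert_iff.1 h2 with rfl | ⟨-, -, ho2⟩
    · exact hT1 hq
    · rw [ho1] at ho2
      exact hpq (Option.some.inj ho2)

end build

lemma mem_edgeSet_top {ε : Sym2 α} (h : ¬ ε.IsDiag) : ε ∈ (⊤ : SimpleGraph α).edgeSet := by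
  induction ε with
  | _ a b =>
    rw [SimpleGraph.mem_edgeSet, SimpleGraph.top_adj]
    rw [Sym2.isDiag_iff_proj_eq] at h
    exact h

theorem main_finset (Tf : Finset (Sym2 α)) (hne : (Finset.univ : Finset α).Nonempty)
    (hnl : ∀ e ∈ Tf, ¬ e.IsDiag) (hcard : Tf.card = Fintype.card α) :
    ∃ 𝔎 : Set (Set (Sym2 α)), 𝔎.ncard = Tf.card ∧
      (∀ A ∈ 𝔎, A ⊆ (⊤ : SimpleGraph α).edgeSet) ∧
      (∀ A ∈ 𝔎, EdgesConnected A) ∧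
      (∀ A ∈ 𝔎, ∀ B ∈ 𝔎, A ≠ B → Disjoint A B) ∧
      (∀ A ∈ 𝔎, ∀ B ∈ 𝔎, A ≠ B → EdgesIncident A B) ∧
      TraversedBy 𝔎 (↑Tf : Set (Sym2 α)) := by
  obtain ⟨w₀, hw₀⟩ := exists_normal Tf hne hcard
  obtain ⟨g, hginj, hgrel'⟩ :=
    (Finset.all_card_le_biUnion_card_iff_exists_injective (rel Tf w₀)).1
      (hall_condition Tf hnl hcard w₀ hw₀)
  have hgmem : ∀ v, g v ∈ Tf := by
    intro v
    have h := hgrel' v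
    rw [rel] at h
    split at h
    · rcases Finset.mem_union.1 h with h | h
      · exact (Finset.mem_filter.1 h).1
      · exact (Finset.mem_sdiff.1 (Finset.mem_sdiff.1 h).1).1
    · exact (Finset.mem_filter.1 h).1
  have hgrel : ∀ v, v ∈ g v ∨
      (Special Tf v ∧ w₀ ∉ g v ∧ ∀ x ∈ g v, ¬ Special Tf x) := by
    intro v
    have h := hgrel' v
    rw [rel] at h
    split at h
    case isTrue hsp =>
      rcases Finset.mem_union.1 h with h | h
      · exact Or.inl (Finset.mem_filter.1 h).2
      · rw [Finset.mem_sdiff, Finset.mem_sdiff] at h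
        refine Or.inr ⟨hsp, ?_, ?_⟩
        · intro hwm
          exact h.1.2 (Finset.mem_filter.2 ⟨h.1.1, hwm⟩)
        · intro x hx hxs
          exact h.2 (Finset.mem_filter.2 ⟨h.1.1, x, hx, hxs⟩)
    case isFalse hsp => exact Or.inl (Finset.mem_filter.1 h).2
  have hgsurj : ∀ t ∈ Tf, ∃ v, g v = t := by
    intro t ht
    have hsub : Finset.image g Finset.univ ⊆ Tf := by
      intro e he
      obtain ⟨v, -, rfl⟩ := Finset.mem_image.1 he
      exact hgmem v
    have hcard2 : Tf.card ≤ (Finset.image g Finset.univ).card := by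
      rw [Finset.card_image_of_injective _ hginj, Finset.card_univ, hcard]
    have := Finset.eq_of_subset_of_card_le hsub hcard2
    rw [← this] at ht
    obtain ⟨v, -, hv⟩ := Finset.mem_image.1 ht
    exact ⟨v, hv⟩
  have hw0m : w₀ ∈ g w₀ := norm_mem Tf g w₀ hgrel hw₀
  set y₀ := Sym2.Mem.other' hw0m with hy₀def
  have hy₀ : s(w₀, y₀) = g w₀ := Sym2.other_spec' hw0m
  have hynorm : ¬ Special Tf y₀ := y₀_norm Tf g w₀ y₀ hw₀ hgmem hy₀
  have hy0m : y₀ ∈ g y₀ := norm_mem Tf g w₀ hgrel hynorm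
  set z_tb := Sym2.Mem.other' hy0m with hztbdef
  have hztb : s(y₀, z_tb) = g y₀ := Sym2.other_spec' hy0m
  refine ⟨(fun q => Sset Tf g w₀ y₀ z_tb q) '' (↑Tf : Set (Sym2 α)), ?_, ?_, ?_, ?_, ?_,
    ?_, ?_⟩
  · -- ncard
    rw [Set.ncard_image_of_injOn, Set.ncard_coe_finset]
    intro q hq q' hq' heq
    have : q ∈ Sset Tf g w₀ y₀ z_tb q' := by
      have h0 : q ∈ Sset Tf g w₀ y₀ z_tb q := mem_Sset_self Tf g w₀ y₀ z_tb q
      simpa only [heq] using h0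
    exact Sset_T_unique Tf g w₀ y₀ z_tb this (Finset.mem_coe.1 hq)
  · -- edge subset
    rintro A ⟨q, hq, rfl⟩ ε hε
    rcases Set.mem_insert_iff.1 hε with rfl | ⟨hd, -, -⟩
    · exact mem_edgeSet_top (hnl ε (Finset.mem_coe.1 hq))
    · exact mem_edgeSet_top hd
  · -- connected
    rintro A ⟨q, hq, rfl⟩
    exact Sset_connected Tf g w₀ y₀ z_tb hnl hw₀ hgmem hgrel hy₀ hztb q
  · -- disjoint
    rintro A ⟨q, hq, rfl⟩ B ⟨q', hq', rfl⟩ hne2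
    refine Sset_disjoint Tf g w₀ y₀ z_tb (Finset.mem_coe.1 hq) (Finset.mem_coe.1 hq') ?_
    rintro rfl
    exact hne2 rfl
  · -- incident
    rintro A ⟨q, hq, rfl⟩ B ⟨q', hq', rfl⟩ hne2
    refine Sset_incident Tf g w₀ y₀ z_tb hnl hw₀ hgmem hginj hgrel hgsurj hy₀ hztb
      (Finset.mem_coe.1 hq) (Finset.mem_coe.1 hq') ?_
    rintro rfl
    exact hne2 rfl
  · -- traversed (unique)
    rintro A ⟨q, hq, rfl⟩
    refine ⟨q, ⟨hq, mem_Sset_self Tf g w₀ y₀ z_tb q⟩, ?_⟩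
    rintro e ⟨heT, heA⟩
    exact Sset_T_unique Tf g w₀ y₀ z_tb heA (Finset.mem_coe.1 heT)
  · -- traversed (cover)
    intro e he
    exact ⟨Sset Tf g w₀ y₀ z_tb e, ⟨e, he, rfl⟩, mem_Sset_self Tf g w₀ y₀ z_tb e⟩

end CGT

/-- For every set `T` of `n` edges of the complete graph on `n ≥ 3` vertices there
is a family of `n` connected, pairwise disjoint, pairwise incident edge sets
traversed by `T`. -/
theorem complete_graph_traversal (n : ℕ) (hn : 3 ≤ n)
    (T : Set (Sym2 (Fin n))) (hT : T ⊆ (⊤ : SimpleGraph (Fin n)).edgeSet)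
    (hTn : T.ncard = n) :
    ∃ 𝔎 : Set (Set (Sym2 (Fin n))), 𝔎.ncard = n ∧
      (∀ A ∈ 𝔎, A ⊆ (⊤ : SimpleGraph (Fin n)).edgeSet) ∧
      (∀ A ∈ 𝔎, EdgesConnected A) ∧
      (∀ A ∈ 𝔎, ∀ B ∈ 𝔎, A ≠ B → Disjoint A B) ∧
      (∀ A ∈ 𝔎, ∀ B ∈ 𝔎, A ≠ B → EdgesIncident A B) ∧
      TraversedBy 𝔎 T := by
  classical
  have hfin : T.Finite := Set.toFinite T
  set Tf : Finset (Sym2 (Fin n)) := hfin.toFinset with hTfdef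
  have hcoe : (↑Tf : Set (Sym2 (Fin n))) = T := hfin.coe_toFinset
  have hnl : ∀ e ∈ Tf, ¬ e.IsDiag := by
    intro e he
    have : e ∈ T := by rw [← hcoe]; exact Finset.mem_coe.2 he
    exact SimpleGraph.not_isDiag_of_mem_edgeSet ⊤ (hT this)
  have hTfcard : Tf.card = n := by
    rw [hTfdef, ← Set.ncard_eq_toFinset_card T hfin, hTn]
  have hcard : Tf.card = Fintype.card (Fin n) := by
    rw [Fintype.card_fin, hTfcard]
  have hne : (Finset.univ : Finset (Fin n)).Nonempty := by
    refine Finset.univ_nonempty_iff.2 ?_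
    exact Fin.pos_iff_nonempty.1 (by omega)
  obtain ⟨𝔎, h1, h2, h3, h4, h5, h6⟩ := CGT.main_finset Tf hne hnl hcard
  rw [hcoe] at h6
  refine ⟨𝔎, ?_, h2, h3, h4, h5, h6⟩
  rw [h1, hTfcard]
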